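/- arXiv:2011.03314 — 5 statements merged into one kernel-verified Lean document; each statement's English description precedes it below -/
import Mathlib

section
/- Let r ≠ 0, Δ > 0, σ > 0, R > 0, α ∈ (0, 1/2), μ ∈ ℝ, and let q be the unique real number with Φ(q) = α. Define the set K_ES := { π ∈ ℝ : −((μ−r)(e^{rΔ}−1)/r)·π + σ·√((e^{2rΔ}−1)/(2r))·(φ(q)/α)·|π| ≤ R } and the constant M_ES := √((e^{2rΔ}−1)/(2r))·(r/(e^{rΔ}−1))·(φ(q)/α). Then M_ES > 0, and with k₁ := −R/( σ√((e^{2rΔ}−1)/(2r))·(φ(q)/α) + (μ−r)(e^{rΔ}−1)/r ) and k₂ := R/( σ√((e^{2rΔ}−1)/(2r))·(φ(q)/α) − (μ−r)(e^{rΔ}−1)/r ): (i) if (μ−r)/σ ≥ M_ES then k₁ ∈ (−∞,0) and K_ES = [k₁, ∞); (ii) if |(μ−r)/σ| < M_ES then k₁ ∈ (−∞,0), k₂ ∈ (0,∞) and K_ES = [k₁, k₂]; (iii) if (μ−r)/σ ≤ −M_ES then k₂ ∈ (0,∞) and K_ES = (−∞, k₂]. -/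
open MeasureTheory ProbabilityTheory Real Filter Set

/-- Cumulative distribution function of the standard normal distribution. -/
noncomputable def stdNormalCDF : ℝ → ℝ :=
  fun x => ProbabilityTheory.cdf (ProbabilityTheory.gaussianReal 0 1) x

/-- Density of the standard normal distribution. -/
noncomputable def stdNormalPDF : ℝ → ℝ :=
  fun x => Real.exp (-x^2/2) / Real.sqrt (2 * Real.pi)

lemma expm1_div_pos {t : ℝ} (ht : t ≠ 0) : 0 < (Real.exp t - 1) / t := by
  rcases ht.lt_or_gt with h | h
  · have : Real.exp t < 1 := Real.exp_lt_one_iff.mpr h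
    exact div_pos_of_neg_of_neg (by linarith) h
  · have := Real.add_one_lt_exp (ne_of_gt h)
    exact div_pos (by linarith) h

lemma es_Ici (A B R : ℝ) (hB : 0 < B) (hR : 0 < R) (h : B ≤ A) :
    -R/(B+A) < 0 ∧ {x : ℝ | -A*x + B*|x| ≤ R} = Set.Ici (-R/(B+A)) := by
  have hBA : 0 < B + A := by linarith
  have hk : (-R/(B+A)) * (B+A) = -R := by field_simp
  have hkneg : -R/(B+A) < 0 := div_neg_of_neg_of_pos (by linarith) hBA
  refine ⟨hkneg, ?_⟩
  ext x
  simp only [Set.mem_setOf_eq, Set.mem_Ici]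
  constructor
  · intro hx
    rcases abs_cases x with ⟨he, hs⟩ | ⟨he, hs⟩ <;> rw [he] at hx <;> nlinarith [hk, hkneg]
  · intro hx
    rcases abs_cases x with ⟨he, hs⟩ | ⟨he, hs⟩ <;> rw [he] <;> nlinarith [hk]

lemma es_Iic (A B R : ℝ) (hB : 0 < B) (hR : 0 < R) (h : A ≤ -B) :
    0 < R/(B-A) ∧ {x : ℝ | -A*x + B*|x| ≤ R} = Set.Iic (R/(B-A)) := by
  have hBA : 0 < B - A := by linarith
  have hk : (R/(B-A)) * (B-A) = R := by field_simp
  have hkpos : 0 < R/(B-A) := div_pos hR hBA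
  refine ⟨hkpos, ?_⟩
  ext x
  simp only [Set.mem_setOf_eq, Set.mem_Iic]
  constructor
  · intro hx
    rcases abs_cases x with ⟨he, hs⟩ | ⟨he, hs⟩ <;> rw [he] at hx <;> nlinarith [hk, hkpos]
  · intro hx
    rcases abs_cases x with ⟨he, hs⟩ | ⟨he, hs⟩ <;> rw [he] <;> nlinarith [hk]

lemma es_Icc (A B R : ℝ) (hB : 0 < B) (hR : 0 < R) (h : |A| < B) :
    -R/(B+A) < 0 ∧ 0 < R/(B-A) ∧
      {x : ℝ | -A*x + B*|x| ≤ R} = Set.Icc (-R/(B+A)) (R/(B-A)) := by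
  rcases abs_lt.mp h with ⟨h1, h2⟩
  have hBA : 0 < B + A := by linarith
  have hBA' : 0 < B - A := by linarith
  have hk1 : (-R/(B+A)) * (B+A) = -R := by field_simp
  have hk2 : (R/(B-A)) * (B-A) = R := by field_simp
  have hk1neg : -R/(B+A) < 0 := div_neg_of_neg_of_pos (by linarith) hBA
  have hk2pos : 0 < R/(B-A) := div_pos hR hBA'
  refine ⟨hk1neg, hk2pos, ?_⟩
  ext x
  simp only [Set.mem_setOf_eq, Set.mem_Icc]
  constructor
  · intro hx
    rcases abs_cases x with ⟨he, hs⟩ | ⟨he, hs⟩ <;> rw [he] at hx <;>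
      constructor <;> nlinarith [hk1, hk2, hk1neg, hk2pos]
  · rintro ⟨hx1, hx2⟩
    rcases abs_cases x with ⟨he, hs⟩ | ⟨he, hs⟩ <;> rw [he] <;> nlinarith [hk1, hk2]

/-- The set of admissible risky-asset positions under a dynamic Expected Shortfall
constraint with risk limit `R`, quantile `q = Φ⁻¹(α)` and evaluation window `Δ`. -/
theorem dynamic_ES_constraint_set
    (r Δ σ R α μ q : ℝ) (hr : r ≠ 0) (hΔ : 0 < Δ) (hσ : 0 < σ) (hR : 0 < R)
    (hα₁ : 0 < α) (hα₂ : α < 1/2) (hq : stdNormalCDF q = α)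
    (K_ES : Set ℝ)
    (hK : K_ES = {x : ℝ |
      -((μ - r) * (Real.exp (r*Δ) - 1) / r) * x
        + σ * Real.sqrt ((Real.exp (2*r*Δ) - 1) / (2*r)) * (stdNormalPDF q / α) * |x| ≤ R})
    (M_ES k₁ k₂ : ℝ)
    (hM : M_ES = Real.sqrt ((Real.exp (2*r*Δ) - 1) / (2*r))
        * (r / (Real.exp (r*Δ) - 1)) * (stdNormalPDF q / α))
    (hk₁ : k₁ = -R / (σ * Real.sqrt ((Real.exp (2*r*Δ) - 1) / (2*r)) * (stdNormalPDF q / α)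
        + (μ - r) * (Real.exp (r*Δ) - 1) / r))
    (hk₂ : k₂ = R / (σ * Real.sqrt ((Real.exp (2*r*Δ) - 1) / (2*r)) * (stdNormalPDF q / α)
        - (μ - r) * (Real.exp (r*Δ) - 1) / r)) :
    0 < M_ES ∧
    ((μ - r) / σ ≥ M_ES → (k₁ < 0 ∧ K_ES = Set.Ici k₁)) ∧
    (|(μ - r) / σ| < M_ES → (k₁ < 0 ∧ 0 < k₂ ∧ K_ES = Set.Icc k₁ k₂)) ∧
    ((μ - r) / σ ≤ -M_ES → (0 < k₂ ∧ K_ES = Set.Iic k₂)) := by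
  set A : ℝ := (μ - r) * (Real.exp (r*Δ) - 1) / r with hA_def
  set S : ℝ := Real.sqrt ((Real.exp (2*r*Δ) - 1) / (2*r)) with hS_def
  set p : ℝ := stdNormalPDF q / α with hp_def
  set B : ℝ := σ * S * p with hB_def
  -- positivity facts
  have hEr : 0 < (Real.exp (r*Δ) - 1) / r := by
    have := expm1_div_pos (t := r*Δ) (mul_ne_zero hr hΔ.ne')
    calc (0:ℝ) < (Real.exp (r*Δ) - 1) / (r*Δ) * Δ := by positivity
    _ = (Real.exp (r*Δ) - 1) / r := by field_simp
  have hE2r : 0 < (Real.exp (2*r*Δ) - 1) / (2*r) := by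
    have h2 : (2:ℝ)*r*Δ ≠ 0 := by
      apply mul_ne_zero (mul_ne_zero two_ne_zero hr) hΔ.ne'
    have := expm1_div_pos (t := 2*r*Δ) h2
    calc (0:ℝ) < (Real.exp (2*r*Δ) - 1) / (2*r*Δ) * Δ := by positivity
    _ = (Real.exp (2*r*Δ) - 1) / (2*r) := by
        field_simp
  have hS : 0 < S := Real.sqrt_pos.mpr hE2r
  have hpdf : 0 < stdNormalPDF q := by
    unfold stdNormalPDF
    positivity
  have hp : 0 < p := div_pos hpdf hα₁
  have hB : 0 < B := by positivity
  have hE : Real.exp (r*Δ) - 1 ≠ 0 := by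
    intro h0
    rw [h0] at hEr
    simp at hEr
  have hrE : 0 < r / (Real.exp (r*Δ) - 1) := by
    have := inv_pos.mpr hEr
    rwa [inv_div] at this
  have hM_pos : 0 < M_ES := by rw [hM]; positivity
  have hσE : 0 < σ * ((Real.exp (r*Δ) - 1) / r) := by positivity
  have hA_eq : A = ((μ - r) / σ) * (σ * ((Real.exp (r*Δ) - 1) / r)) := by
    rw [hA_def]; field_simp
  have hB_eq : B = M_ES * (σ * ((Real.exp (r*Δ) - 1) / r)) := by
    rw [hB_def, hM, hS_def, hp_def]
    field_simp
  have hKset : K_ES = {x : ℝ | -A*x + B*|x| ≤ R} := hK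
  have hk₁' : k₁ = -R / (B + A) := hk₁
  have hk₂' : k₂ = R / (B - A) := hk₂
  refine ⟨hM_pos, ?_, ?_, ?_⟩
  · intro h
    have hBA : B ≤ A := by
      rw [hA_eq, hB_eq]
      exact mul_le_mul_of_nonneg_right h hσE.le
    obtain ⟨h1, h2⟩ := es_Ici A B R hB hR hBA
    rw [hk₁', hKset]
    exact ⟨h1, h2⟩
  · intro h
    have habs : |A| < B := by
      rw [hA_eq, hB_eq, abs_mul, abs_of_pos hσE]
      exact mul_lt_mul_of_pos_right h hσE
    obtain ⟨h1, h2, h3⟩ := es_Icc A B R hB hR habs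
    rw [hk₁', hk₂', hKset]
    exact ⟨h1, h2, h3⟩
  · intro h
    have hBA : A ≤ -B := by
      rw [hA_eq, hB_eq, ← neg_mul]
      exact mul_le_mul_of_nonneg_right h hσE.le
    obtain ⟨h1, h2⟩ := es_Iic A B R hB hR hBA
    rw [hk₂', hKset]
    exact ⟨h1, h2⟩
end

section
/- For α ∈ (0,1) let q(α) denote the unique real number with Φ(q(α)) = α. Then the function α ↦ φ(q(α))/α is strictly decreasing on (0,1); that is, for 0 < α₁ < α₂ < 1 one has φ(q(α₁))/α₁ > φ(q(α₂))/α₂. -/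
open MeasureTheory ProbabilityTheory Real Filter Set

lemma stdNormalPDF_eq : stdNormalPDF = gaussianPDFReal 0 1 := by
  funext x
  simp only [stdNormalPDF, gaussianPDFReal, NNReal.coe_one, mul_one, sub_zero]
  rw [div_eq_inv_mul]

lemma stdNormalPDF_pos (x : ℝ) : 0 < stdNormalPDF x := by
  rw [stdNormalPDF_eq]
  exact gaussianPDFReal_pos _ _ _ one_ne_zero

lemma stdNormalPDF_continuous : Continuous stdNormalPDF := by
  apply Continuous.div_const
  exact Real.continuous_exp.comp (by continuity)

lemma stdNormalPDF_integrable : Integrable stdNormalPDF := by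
  rw [stdNormalPDF_eq]; exact integrable_gaussianPDFReal 0 1

lemma hasDerivAt_stdNormalPDF (x : ℝ) :
    HasDerivAt stdNormalPDF (-x * stdNormalPDF x) x := by
  have h1 : HasDerivAt (fun y : ℝ => -y^2/2) (-x) x := by
    have h := (((hasDerivAt_id x).mul (hasDerivAt_id x)).neg).div_const 2
    have hf : (fun y : ℝ => -y^2/2) = fun y : ℝ => -(id y * id y) / 2 := by
      funext y; simp only [id_eq]; ring
    have he : -(1 * id x + id x * 1) / 2 = -x := by simp only [id_eq]; ring
    rw [hf, ← he]
    exact h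
  have h2 : HasDerivAt (fun y : ℝ => Real.exp (-y^2/2)) (Real.exp (-x^2/2) * (-x)) x :=
    (Real.hasDerivAt_exp _).comp x h1
  have h3 := h2.div_const (Real.sqrt (2 * Real.pi))
  have hv : Real.exp (-x^2/2) * (-x) / Real.sqrt (2 * Real.pi) = -x * stdNormalPDF x := by
    simp only [stdNormalPDF]; ring
  rw [hv] at h3
  exact h3

lemma stdNormalPDF_tendsto_atBot : Tendsto stdNormalPDF atBot (nhds 0) := by
  have h1 : Tendsto (fun x : ℝ => x^2) atBot atTop := by
    have h := (tendsto_pow_atTop (α := ℝ) (n := 2) (by norm_num)).comp tendsto_neg_atBot_atTop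
    refine h.congr fun x => ?_
    simp [Function.comp, neg_pow]
  have hsq : Tendsto (fun x : ℝ => -x^2/2) atBot atBot := by
    have := tendsto_neg_atTop_atBot.comp h1
    exact Tendsto.atBot_div_const (by norm_num : (0:ℝ) < 2) this
  have h2 := (Real.tendsto_exp_atBot).comp hsq
  have h3 := h2.div_const (Real.sqrt (2 * Real.pi))
  rw [show (0:ℝ) = 0 / Real.sqrt (2 * Real.pi) by simp]
  exact h3

lemma integrable_neg_mul_pdf : Integrable (fun t : ℝ => (-t) * stdNormalPDF t) := by
  have h : Integrable (fun t : ℝ => t * Real.exp (-(1/2 : ℝ) * t^2)) :=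
    integrable_mul_exp_neg_mul_sq (by norm_num)
  have h2 := (h.neg).div_const (Real.sqrt (2 * Real.pi))
  refine h2.congr ?_
  filter_upwards with t
  simp only [Pi.neg_apply]
  have : -(1/2 : ℝ) * t^2 = -t^2/2 := by ring
  rw [this]
  simp only [stdNormalPDF]
  ring

/-- key: `∫_{-∞}^x (-t)·φ(t) dt = φ(x)`. -/
lemma integral_neg_mul_pdf (x : ℝ) :
    ∫ t in Iic x, (-t) * stdNormalPDF t = stdNormalPDF x := by
  have := integral_Iic_of_hasDerivAt_of_tendsto'
    (f := stdNormalPDF) (f' := fun t => (-t) * stdNormalPDF t) (a := x)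
    (fun t _ => hasDerivAt_stdNormalPDF t) integrable_neg_mul_pdf.integrableOn
    stdNormalPDF_tendsto_atBot
  simpa using this

lemma stdNormalCDF_eq (x : ℝ) : stdNormalCDF x = ∫ t in Iic x, stdNormalPDF t := by
  rw [stdNormalCDF, cdf_eq_real, measureReal_def, gaussianReal_apply_eq_integral 0 one_ne_zero,
    ENNReal.toReal_ofReal, stdNormalPDF_eq]
  exact setIntegral_nonneg measurableSet_Iic fun t _ => (gaussianPDFReal_pos 0 1 t one_ne_zero).le

lemma stdNormalCDF_nonneg (x : ℝ) : 0 ≤ stdNormalCDF x := by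
  simp only [stdNormalCDF]
  exact cdf_nonneg (gaussianReal 0 1) x

lemma stdNormalCDF_sub (a b : ℝ) :
    stdNormalCDF b - stdNormalCDF a = ∫ t in a..b, stdNormalPDF t := by
  rw [stdNormalCDF_eq, stdNormalCDF_eq]
  exact intervalIntegral.integral_Iic_sub_Iic
    stdNormalPDF_integrable.integrableOn stdNormalPDF_integrable.integrableOn

lemma stdNormalCDF_strictMono : StrictMono stdNormalCDF := by
  intro a b hab
  have h : 0 < ∫ t in a..b, stdNormalPDF t :=
    intervalIntegral.intervalIntegral_pos_of_pos
      (stdNormalPDF_integrable.intervalIntegrable) (fun t => stdNormalPDF_pos t) hab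
  have := stdNormalCDF_sub a b
  linarith

lemma stdNormalCDF_pos (x : ℝ) : 0 < stdNormalCDF x := by
  have h1 : 0 ≤ stdNormalCDF (x - 1) := stdNormalCDF_nonneg _
  have h2 := stdNormalCDF_strictMono (show x - 1 < x by linarith)
  linarith

/-- Key inequality: `x·Φ(x) + φ(x) > 0`. -/
lemma key_pos (x : ℝ) : 0 < x * stdNormalCDF x + stdNormalPDF x := by
  have hφ : IntegrableOn stdNormalPDF (Iic x) := stdNormalPDF_integrable.integrableOn
  have hneg : IntegrableOn (fun t : ℝ => (-t) * stdNormalPDF t) (Iic x) :=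
    integrable_neg_mul_pdf.integrableOn
  have hint : IntegrableOn (fun t : ℝ => (x - t) * stdNormalPDF t) (Iic x) := by
    have h := (hφ.const_mul x).add hneg
    refine h.congr ?_
    filter_upwards with t
    simp only [Pi.add_apply]
    ring
  have heq : x * stdNormalCDF x + stdNormalPDF x
      = ∫ t in Iic x, (x - t) * stdNormalPDF t := by
    rw [stdNormalCDF_eq, ← integral_neg_mul_pdf x, ← MeasureTheory.integral_const_mul,
      ← MeasureTheory.integral_add (hφ.const_mul x) hneg]
    congr 1
    funext t
    ring
  rw [heq]
  rw [MeasureTheory.setIntegral_pos_iff_support_of_nonneg_ae ?_ hint]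
  · refine lt_of_lt_of_le ?_ (measure_mono (?_ : Ioo (x-1) x ⊆ _))
    · simp [Real.volume_Ioo]
    · intro t ht
      constructor
      · simp only [Function.mem_support]
        have h1 : 0 < x - t := by linarith [ht.2]
        exact ne_of_gt (mul_pos h1 (stdNormalPDF_pos t))
      · exact le_of_lt ht.2
  · refine (ae_restrict_iff' measurableSet_Iic).2 ?_
    filter_upwards with t ht
    have h1 : 0 ≤ x - t := by simpa using ht
    exact mul_nonneg h1 (stdNormalPDF_pos t).le

lemma hasDerivAt_stdNormalCDF (x : ℝ) :
    HasDerivAt stdNormalCDF (stdNormalPDF x) x := by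
  have heq : stdNormalCDF = fun y => stdNormalCDF 0 + ∫ t in (0:ℝ)..y, stdNormalPDF t := by
    funext y
    have := stdNormalCDF_sub 0 y
    linarith
  rw [heq]
  have h := intervalIntegral.integral_hasDerivAt_right
    (stdNormalPDF_integrable.intervalIntegrable (a := 0) (b := x))
    (stdNormalPDF_continuous.aestronglyMeasurable.stronglyMeasurableAtFilter)
    (stdNormalPDF_continuous.continuousAt)
  simpa using (h.const_add (stdNormalCDF 0))

lemma ratio_strictAnti : StrictAnti (fun x => stdNormalPDF x / stdNormalCDF x) := by
  have hderiv : ∀ x : ℝ, HasDerivAt (fun x => stdNormalPDF x / stdNormalCDF x)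
      ((-x * stdNormalPDF x * stdNormalCDF x - stdNormalPDF x * stdNormalPDF x)
        / (stdNormalCDF x)^2) x := fun x =>
    (hasDerivAt_stdNormalPDF x).div (hasDerivAt_stdNormalCDF x) (stdNormalCDF_pos x).ne'
  apply strictAnti_of_deriv_neg
  intro x
  rw [(hderiv x).deriv]
  apply div_neg_of_neg_of_pos
  · have h1 := key_pos x
    have h2 := stdNormalPDF_pos x
    nlinarith
  · exact pow_pos (stdNormalCDF_pos x) 2

/-- The standard normal Expected Shortfall factor `α ↦ φ(Φ⁻¹(α))/α` is strictly
decreasing on `(0,1)`: if `0 < α₁ < α₂ < 1` and `Φ(qᵢ) = αᵢ`, then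
`φ(q₁)/α₁ > φ(q₂)/α₂`. -/
theorem es_factor_strictAnti
    (α₁ α₂ q₁ q₂ : ℝ) (h₁ : 0 < α₁) (h₁₂ : α₁ < α₂) (h₂ : α₂ < 1)
    (hq₁ : stdNormalCDF q₁ = α₁) (hq₂ : stdNormalCDF q₂ = α₂) :
    stdNormalPDF q₁ / α₁ > stdNormalPDF q₂ / α₂ := by
  have hlt : q₁ < q₂ := by
    by_contra h
    push_neg at h
    have := stdNormalCDF_strictMono.monotone h
    rw [hq₁, hq₂] at this
    linarith
  simpa only [hq₁, hq₂] using ratio_strictAnti hlt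
end

section
/- Let r ≠ 0. Then the function Δ ↦ ( r/(e^{rΔ} − 1) )·√( (e^{2rΔ} − 1)/(2r) ) is strictly decreasing on (0, ∞). -/
open Real Set

lemma risk_key_pos (r : ℝ) (hr : r ≠ 0) {Δ : ℝ} (hΔ : 0 < Δ) :
    0 < r * (Real.exp (r*Δ) - 1) := by
  rcases hr.lt_or_gt with h | h
  · have h1 : Real.exp (r*Δ) < 1 := by
      rw [← Real.exp_zero]
      exact Real.exp_lt_exp.2 (by nlinarith)
    nlinarith
  · have h1 : 1 < Real.exp (r*Δ) := by
      rw [← Real.exp_zero]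
      exact Real.exp_lt_exp.2 (by nlinarith)
    nlinarith

lemma risk_rewrite (r : ℝ) (hr : r ≠ 0) {Δ : ℝ} (hΔ : 0 < Δ) :
    (r / (Real.exp (r*Δ) - 1)) * Real.sqrt ((Real.exp (2*r*Δ) - 1) / (2*r))
      = Real.sqrt (r^2 * (Real.exp (r*Δ) + 1) / (2 * (r * (Real.exp (r*Δ) - 1)))) := by
  have hk := risk_key_pos r hr hΔ
  have hne : Real.exp (r*Δ) - 1 ≠ 0 := by
    intro h; rw [h] at hk; simp at hk
  have hc : 0 ≤ r / (Real.exp (r*Δ) - 1) := by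
    have : r / (Real.exp (r*Δ) - 1) = (r * (Real.exp (r*Δ) - 1)) / ((Real.exp (r*Δ) - 1)^2) := by
      field_simp
    rw [this]; positivity
  have hexp2 : Real.exp (2*r*Δ) = (Real.exp (r*Δ))^2 := by
    rw [show 2*r*Δ = r*Δ + r*Δ by ring, Real.exp_add, sq]
  calc (r / (Real.exp (r*Δ) - 1)) * Real.sqrt ((Real.exp (2*r*Δ) - 1) / (2*r))
      = Real.sqrt ((r / (Real.exp (r*Δ) - 1))^2) * Real.sqrt ((Real.exp (2*r*Δ) - 1) / (2*r)) := by
        rw [Real.sqrt_sq hc]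
    _ = Real.sqrt ((r / (Real.exp (r*Δ) - 1))^2 * ((Real.exp (2*r*Δ) - 1) / (2*r))) := by
        rw [Real.sqrt_mul (by positivity)]
    _ = Real.sqrt (r^2 * (Real.exp (r*Δ) + 1) / (2 * (r * (Real.exp (r*Δ) - 1)))) := by
        congr 1
        rw [hexp2]
        field_simp
        ring

/-- The common factor `Δ ↦ (r/(e^{rΔ}-1))·√((e^{2rΔ}-1)/(2r))` in the threshold
constants `M_VaR` and `M_ES` is strictly decreasing in the evaluation window `Δ`. -/
theorem risk_threshold_factor_strictAnti (r : ℝ) (hr : r ≠ 0) :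
    StrictAntiOn
      (fun Δ : ℝ => (r / (Real.exp (r*Δ) - 1))
        * Real.sqrt ((Real.exp (2*r*Δ) - 1) / (2*r)))
      (Set.Ioi (0 : ℝ)) := by
  intro x hx y hy hxy
  simp only
  rw [risk_rewrite r hr hx, risk_rewrite r hr hy]
  set a := Real.exp (r*x) with ha
  set b := Real.exp (r*y) with hb
  have hka := risk_key_pos r hr hx
  have hkb := risk_key_pos r hr hy
  have hap : (0:ℝ) < a := Real.exp_pos _
  have hbp : (0:ℝ) < b := Real.exp_pos _
  have hba : 0 < r * (b - a) := by
    rcases hr.lt_or_gt with h | h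
    · have : b < a := Real.exp_lt_exp.2 (by nlinarith)
      nlinarith
    · have : a < b := Real.exp_lt_exp.2 (by nlinarith)
      nlinarith
  have hr2 : (0:ℝ) < r^2 := by positivity
  apply Real.sqrt_lt_sqrt
  · apply div_nonneg
    · nlinarith
    · nlinarith
  · rw [div_lt_div_iff₀ (by nlinarith) (by nlinarith)]
    nlinarith [mul_pos hr2 hba, mul_pos (mul_pos hr2 hba) hbp, mul_pos (mul_pos hr2 hba) hap]
end

section
/- Let r ∈ ℝ, μ > r, σ > 0, τ > 0, S > 0, α ∈ (0,1), h > 0, λ₂ ∈ (0, μ − r), and set ν := r − σ²/2 and ν̃ := μ − σ²/2. For k ∈ ℝ define d(k, S') := (k − ln S' − ν·τ)/(σ·√τ), d̃(k, S') := (k − ln S' − ν̃·τ)/(σ·√τ), and ℓ(k) := h − (h + e^{rτ})/Φ(d(k, S)). Then lim_{k → −∞} [ −(1/α)·( ℓ(k)·Φ(d̃(k, S·e^{−λ₂τ})) + h·( α − Φ(d̃(k, S·e^{−λ₂τ})) ) ) ] = −h. -/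
open MeasureTheory ProbabilityTheory Real Filter Set

lemma stdNormalCDF_eq_integral (x : ℝ) :
    stdNormalCDF x = ∫ t in Iic x, gaussianPDFReal 0 1 t := by
  rw [stdNormalCDF, cdf_eq_real, measureReal_def, gaussianReal_apply_eq_integral 0 one_ne_zero,
    ENNReal.toReal_ofReal (integral_nonneg fun t => gaussianPDFReal_nonneg 0 1 t)]

lemma chernoff (y a : ℝ) (ha : 0 ≤ a) :
    stdNormalCDF y ≤ Real.exp (a^2/2 + a*y) := by
  rw [stdNormalCDF_eq_integral]
  have key : ∀ t : ℝ, gaussianPDFReal 0 1 t * Real.exp (a*(y-t))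
      = Real.exp (a^2/2 + a*y) * gaussianPDFReal (-a) 1 t := by
    intro t
    simp only [gaussianPDFReal, NNReal.coe_one, mul_one, sub_zero, sub_neg_eq_add]
    rw [mul_assoc, ← Real.exp_add, ← mul_assoc, mul_comm (Real.exp _), mul_assoc,
      ← Real.exp_add]
    congr 1
    ring
  have hint : Integrable (fun t => gaussianPDFReal 0 1 t * Real.exp (a*(y-t))) := by
    simp_rw [key]
    exact (integrable_gaussianPDFReal (-a) 1).const_mul _
  calc ∫ t in Iic y, gaussianPDFReal 0 1 t
      ≤ ∫ t in Iic y, gaussianPDFReal 0 1 t * Real.exp (a*(y-t)) := by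
        refine setIntegral_mono_on ((integrable_gaussianPDFReal 0 1).integrableOn)
          hint.integrableOn measurableSet_Iic (fun t ht => ?_)
        nth_rewrite 1 [← mul_one (gaussianPDFReal 0 1 t)]
        refine mul_le_mul_of_nonneg_left ?_ (gaussianPDFReal_nonneg 0 1 t)
        rw [← Real.exp_zero]
        exact Real.exp_le_exp.mpr (mul_nonneg ha (by linarith [mem_Iic.mp ht]))
    _ ≤ ∫ t, gaussianPDFReal 0 1 t * Real.exp (a*(y-t)) :=
        setIntegral_le_integral hint (Filter.Eventually.of_forall fun t =>
          mul_nonneg (gaussianPDFReal_nonneg 0 1 t) (Real.exp_nonneg _))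
    _ = Real.exp (a^2/2 + a*y) := by
        simp_rw [key]
        rw [integral_const_mul, integral_gaussianPDFReal_eq_one _ one_ne_zero, mul_one]

lemma cdf_lower (x ε : ℝ) (hx : x ≤ 0) (hε : 0 < ε) :
    ε * gaussianPDFReal 0 1 (x - ε) ≤ stdNormalCDF x := by
  rw [stdNormalCDF_eq_integral]
  have h2 : ∫ _t in Ioc (x-ε) x, gaussianPDFReal 0 1 (x-ε)
      = ε * gaussianPDFReal 0 1 (x-ε) := by
    rw [setIntegral_const, Real.volume_real_Ioc_of_le (by linarith), smul_eq_mul]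
    ring_nf
  have h1 : ∫ _t in Ioc (x-ε) x, gaussianPDFReal 0 1 (x-ε)
      ≤ ∫ t in Ioc (x-ε) x, gaussianPDFReal 0 1 t := by
    refine setIntegral_mono_on ((integrableOn_const_iff (C := gaussianPDFReal 0 1 (x-ε))).mpr (Or.inr (by
      simp [Real.volume_Ioc, ENNReal.ofReal_lt_top])))
      ((integrable_gaussianPDFReal 0 1).integrableOn) measurableSet_Ioc (fun t ht => ?_)
    obtain ⟨ht1, ht2⟩ := ht
    simp only [gaussianPDFReal, NNReal.coe_one, mul_one, sub_zero]
    refine mul_le_mul_of_nonneg_left (Real.exp_le_exp.mpr ?_) (by positivity)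
    have : t^2 ≤ (x - ε)^2 := by nlinarith
    linarith
  have h3 : ∫ t in Ioc (x-ε) x, gaussianPDFReal 0 1 t
      ≤ ∫ t in Iic x, gaussianPDFReal 0 1 t := by
    refine setIntegral_mono_set ((integrable_gaussianPDFReal 0 1).integrableOn)
      (Filter.Eventually.of_forall fun t => gaussianPDFReal_nonneg 0 1 t)
      (HasSubset.Subset.eventuallyLE Ioc_subset_Iic_self)
  linarith

lemma ratio_tendsto_zero {c : ℝ} (hc : c < 0) :
    Tendsto (fun x => stdNormalCDF (x + c) / stdNormalCDF x) atBot (nhds 0) := by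
  set ε : ℝ := -c/2 with hεdef
  have hε : 0 < ε := by simp [hεdef]; linarith
  set B : ℝ := Real.sqrt (2*π) / ε * Real.exp (ε^2/2) with hB
  have hbound : Tendsto (fun x : ℝ => B * Real.exp ((-(c/2))*x)) atBot (nhds 0) := by
    have h1 : Tendsto (fun x : ℝ => (-(c/2))*x) atBot atBot := by
      refine Tendsto.const_mul_atBot (by linarith) tendsto_id
    have := (Real.tendsto_exp_atBot.comp h1).const_mul B
    simpa using this
  refine tendsto_of_tendsto_of_tendsto_of_le_of_le' tendsto_const_nhds hbound ?_ ?_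
  · exact Filter.Eventually.of_forall fun x =>
      div_nonneg (stdNormalCDF_pos _).le (stdNormalCDF_pos _).le
  · filter_upwards [Filter.eventually_le_atBot (0:ℝ)] with x hx
    have hnum : stdNormalCDF (x + c) ≤ Real.exp ((-x)^2/2 + (-x)*(x+c)) :=
      chernoff (x+c) (-x) (by linarith)
    have hden : ε * gaussianPDFReal 0 1 (x - ε) ≤ stdNormalCDF x := cdf_lower x ε hx hε
    have hdenpos : 0 < ε * gaussianPDFReal 0 1 (x - ε) :=
      mul_pos hε (gaussianPDFReal_pos _ _ _ one_ne_zero)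
    calc stdNormalCDF (x + c) / stdNormalCDF x
        ≤ Real.exp ((-x)^2/2 + (-x)*(x+c)) / (ε * gaussianPDFReal 0 1 (x - ε)) := by
          exact div_le_div₀ (Real.exp_nonneg _) hnum hdenpos hden
      _ = B * Real.exp ((-(c/2))*x) := by
          simp only [gaussianPDFReal, NNReal.coe_one, mul_one, sub_zero]
          rw [div_eq_iff (by positivity), hB]
          rw [show Real.sqrt (2*π)/ε * Real.exp (ε^2/2) * Real.exp (-(c/2)*x)
                * (ε * ((Real.sqrt (2*π))⁻¹ * Real.exp (-(x-ε)^2/2)))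
              = (Real.sqrt (2*π)/ε * ε * (Real.sqrt (2*π))⁻¹)
                * Real.exp (ε^2/2 + -(c/2)*x + -(x-ε)^2/2) from by
            rw [Real.exp_add, Real.exp_add]; ring]
          rw [show Real.sqrt (2*π)/ε * ε * (Real.sqrt (2*π))⁻¹ = 1 from by
            have h2π : Real.sqrt (2*π) ≠ 0 := by positivity
            field_simp]
          rw [one_mul]
          congr 1
          rw [hεdef]; ring

/-- As the strike `k → -∞`, the Expected Shortfall at level `α`, at the
down-shifted spot `S·e^{-λ₂τ}`, of the budget-constrained digital option paying
`h` above `e^k` and `ℓ(k)` below, tends to `-h`. -/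
theorem digital_ES_down_shifted_spot_limit
    (r μ σ τ S α h lam₂ : ℝ) (hμ : r < μ) (hσ : 0 < σ) (hτ : 0 < τ) (hS : 0 < S)
    (hα₁ : 0 < α) (hα₂ : α < 1) (hh : 0 < h)
    (hlam₁ : 0 < lam₂) (hlam₂ : lam₂ < μ - r)
    (ν ν' : ℝ) (hν : ν = r - σ^2/2) (hν' : ν' = μ - σ^2/2)
    (d d' : ℝ → ℝ → ℝ)
    (hd : ∀ k S', d k S' = (k - Real.log S' - ν*τ) / (σ * Real.sqrt τ))
    (hd' : ∀ k S', d' k S' = (k - Real.log S' - ν'*τ) / (σ * Real.sqrt τ))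
    (l : ℝ → ℝ) (hl : ∀ k, l k = h - (h + Real.exp (r*τ)) / stdNormalCDF (d k S)) :
    Filter.Tendsto
      (fun k : ℝ => -(1/α) *
        (l k * stdNormalCDF (d' k (S * Real.exp (-(lam₂*τ))))
          + h * (α - stdNormalCDF (d' k (S * Real.exp (-(lam₂*τ)))))))
      Filter.atBot (nhds (-h)) := by
  have hτ' : 0 < Real.sqrt τ := Real.sqrt_pos.mpr hτ
  have hστ : 0 < σ * Real.sqrt τ := mul_pos hσ hτ'
  set c : ℝ := (lam₂ - μ + r) * Real.sqrt τ / σ with hcdef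
  have hc : c < 0 :=
    div_neg_of_neg_of_pos (mul_neg_of_neg_of_pos (by linarith) hτ') hσ
  have hsq : Real.sqrt τ * Real.sqrt τ = τ := Real.mul_self_sqrt hτ.le
  have hshift : ∀ k, d' k (S * Real.exp (-(lam₂*τ))) = d k S + c := by
    intro k
    rw [hd', hd, hcdef, Real.log_mul hS.ne' (Real.exp_ne_zero _), Real.log_exp, hν, hν']
    have hc2 : (lam₂ - μ + r) * Real.sqrt τ / σ
        = ((lam₂ - μ + r) * τ) / (σ * Real.sqrt τ) := by
      rw [← hsq]; field_simp
      rw [Real.sqrt_sq hτ'.le]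
    rw [hc2, ← add_div]
    congr 1
    ring
  have hEq : ∀ k : ℝ, -(1/α) *
        (l k * stdNormalCDF (d' k (S * Real.exp (-(lam₂*τ))))
          + h * (α - stdNormalCDF (d' k (S * Real.exp (-(lam₂*τ))))))
      = -h + ((h + Real.exp (r*τ))/α)
          * (stdNormalCDF (d k S + c) / stdNormalCDF (d k S)) := by
    intro k
    rw [hshift k, hl k]
    have h0 : stdNormalCDF (d k S) ≠ 0 := (stdNormalCDF_pos (d k S)).ne'
    field_simp
    ring
  have hx : Tendsto (fun k => d k S) atBot atBot := by
    simp only [hd, sub_eq_add_neg]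
    exact Tendsto.atBot_div_const hστ
      (tendsto_atBot_add_const_right _ _ (tendsto_atBot_add_const_right _ _ tendsto_id))
  have hratio : Tendsto (fun k => stdNormalCDF (d k S + c) / stdNormalCDF (d k S))
      atBot (nhds 0) := (ratio_tendsto_zero hc).comp hx
  have hfinal : Tendsto (fun k : ℝ => -h + ((h + Real.exp (r*τ))/α)
        * (stdNormalCDF (d k S + c) / stdNormalCDF (d k S)))
      atBot (nhds (-h + ((h + Real.exp (r*τ))/α) * 0)) :=
    tendsto_const_nhds.add (hratio.const_mul _)
  rw [mul_zero, add_zero] at hfinal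
  exact Tendsto.congr (fun k => (hEq k).symm) hfinal
end

section
/- Consider a two-asset economy with risk-free rate r ≠ 0, drifts μ₁, μ₂ ∈ ℝ, volatilities σ₁, σ₂ > 0, correlation ρ ∈ (−1, 1), evaluation window Δ > 0, risk limit R > 0 and confidence level α ∈ (0, 1/2), and let q be the unique real number with Φ(q) = α. Define K_ES := { (π₁, π₂) ∈ ℝ² : −((e^{rΔ}−1)/r)·( (μ₁−r)π₁ + (μ₂−r)π₂ ) + (φ(q)/α)·√( ((e^{2rΔ}−1)/(2r))·( σ₁²π₁² + σ₂²π₂² + 2ρσ₁σ₂π₁π₂ ) ) ≤ R } and M_ES := √((e^{2rΔ}−1)/(2r))·(r/(e^{rΔ}−1))·(φ(q)/α). If √( ( ((μ₁−r)/σ₁)² + ((μ₂−r)/σ₂)² − 2((μ₁−r)/σ₁)((μ₂−r)/σ₂)ρ ) / (1 − ρ²) ) < M_ES, then the set K_ES is bounded. -/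
open MeasureTheory ProbabilityTheory Real Filter Set

lemma exp_mul_sub_one_div_pos {x y : ℝ} (hx : x ≠ 0) (hy : 0 < y) :
    0 < (Real.exp (x*y) - 1) / x := by
  rcases hx.lt_or_gt with h | h
  · apply div_pos_of_neg_of_neg _ h
    have : Real.exp (x*y) < 1 := by
      rw [Real.exp_lt_one_iff]
      exact mul_neg_of_neg_of_pos h hy
    linarith
  · apply div_pos _ h
    have : 1 < Real.exp (x*y) := by
      have := Real.add_one_lt_exp (ne_of_gt (mul_pos h hy))
      nlinarith [mul_pos h hy]
    linarith


lemma quad_nonneg (σ₁ σ₂ ρ x y : ℝ) (h : 0 ≤ 1 - ρ^2) :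
    0 ≤ σ₁^2*x^2 + σ₂^2*y^2 + 2*ρ*σ₁*σ₂*x*y := by
  nlinarith [sq_nonneg (σ₁*x + ρ*σ₂*y), mul_nonneg h (sq_nonneg (σ₂*y))]

lemma quad_lower1 (σ₁ σ₂ ρ x y : ℝ) :
    (1 - ρ^2)*σ₁^2*x^2 ≤ σ₁^2*x^2 + σ₂^2*y^2 + 2*ρ*σ₁*σ₂*x*y := by
  nlinarith [sq_nonneg (ρ*σ₁*x + σ₂*y)]

lemma quad_lower2 (σ₁ σ₂ ρ x y : ℝ) :
    (1 - ρ^2)*σ₂^2*y^2 ≤ σ₁^2*x^2 + σ₂^2*y^2 + 2*ρ*σ₁*σ₂*x*y := by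
  nlinarith [sq_nonneg (σ₁*x + ρ*σ₂*y)]

lemma sharpe_nonneg (u v ρ : ℝ) (h1 : -1 < ρ) (h2 : ρ < 1) :
    0 ≤ u^2 + v^2 - 2*u*v*ρ := by
  nlinarith [sq_nonneg (u + v), sq_nonneg (u - v)]

lemma cs_poly (m1 m2 σ₁ σ₂ ρ x y : ℝ) :
    (m1*x + m2*y)^2 * (σ₁^2 * σ₂^2 * (1 - ρ^2))
      ≤ (m1^2*σ₂^2 + m2^2*σ₁^2 - 2*m1*m2*σ₁*σ₂*ρ)
        * (σ₁^2*x^2 + σ₂^2*y^2 + 2*ρ*σ₁*σ₂*x*y) := by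
  have heq : (m1^2*σ₂^2 + m2^2*σ₁^2 - 2*m1*m2*σ₁*σ₂*ρ)
        * (σ₁^2*x^2 + σ₂^2*y^2 + 2*ρ*σ₁*σ₂*x*y)
      - (m1*x + m2*y)^2 * (σ₁^2 * σ₂^2 * (1 - ρ^2))
      = (m1*σ₂^2*y - m2*σ₁^2*x + ρ*σ₁*σ₂*(m1*x - m2*y))^2 := by ring
  linarith [sq_nonneg (m1*σ₂^2*y - m2*σ₁^2*x + ρ*σ₁*σ₂*(m1*x - m2*y)), heq]

set_option maxHeartbeats 1000000 in
/-- In a two-asset economy, if the diversification-adjusted Sharpe ratio is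
smaller than the threshold `M_ES`, then the dynamic Expected Shortfall
constraint set is bounded. -/
theorem two_asset_ES_constraint_set_bounded
    (r μ₁ μ₂ σ₁ σ₂ ρ Δ R α q : ℝ) (hr : r ≠ 0) (hσ₁ : 0 < σ₁) (hσ₂ : 0 < σ₂)
    (hρ₁ : -1 < ρ) (hρ₂ : ρ < 1) (hΔ : 0 < Δ) (hR : 0 < R)
    (hα₁ : 0 < α) (hα₂ : α < 1/2) (hq : stdNormalCDF q = α)
    (K_ES : Set (ℝ × ℝ))
    (hK : K_ES = {p : ℝ × ℝ |
      -((Real.exp (r*Δ) - 1) / r) * ((μ₁ - r) * p.1 + (μ₂ - r) * p.2)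
        + (stdNormalPDF q / α) * Real.sqrt (((Real.exp (2*r*Δ) - 1) / (2*r))
            * (σ₁^2 * p.1^2 + σ₂^2 * p.2^2 + 2*ρ*σ₁*σ₂*p.1*p.2)) ≤ R})
    (M_ES : ℝ)
    (hM : M_ES = Real.sqrt ((Real.exp (2*r*Δ) - 1) / (2*r))
        * (r / (Real.exp (r*Δ) - 1)) * (stdNormalPDF q / α))
    (hSharpe : Real.sqrt ((((μ₁ - r)/σ₁)^2 + ((μ₂ - r)/σ₂)^2
        - 2*((μ₁ - r)/σ₁)*((μ₂ - r)/σ₂)*ρ) / (1 - ρ^2)) < M_ES) :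
    Bornology.IsBounded K_ES := by
  set m1 := μ₁ - r with hm1
  set m2 := μ₂ - r with hm2
  set A := (Real.exp (r*Δ) - 1) / r with hA
  set B := (Real.exp (2*r*Δ) - 1) / (2*r) with hB
  set c := stdNormalPDF q / α with hcdef
  set S := Real.sqrt (((m1/σ₁)^2 + (m2/σ₂)^2 - 2*(m1/σ₁)*(m2/σ₂)*ρ) / (1 - ρ^2)) with hSdef
  have h1ρ : (0:ℝ) < 1 - ρ^2 := by nlinarith
  have hφ : 0 < stdNormalPDF q := by
    unfold stdNormalPDF
    positivity
  have hc : 0 < c := div_pos hφ hα₁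
  have ha : 0 < A := exp_mul_sub_one_div_pos hr hΔ
  have hb : 0 < B := by
    have := exp_mul_sub_one_div_pos (x := 2*r) (y := Δ) (by simpa using hr) hΔ
    rw [hB]
    exact this
  have hne : Real.exp (r*Δ) - 1 ≠ 0 := by
    intro h
    rw [hA, h, zero_div] at ha
    exact lt_irrefl 0 ha
  have hAM : A * M_ES = Real.sqrt B * c := by
    rw [hM, hA]
    field_simp
  have hS0 : 0 ≤ S := Real.sqrt_nonneg _
  have hSM : S < M_ES := hSharpe
  have hM0 : 0 < M_ES := lt_of_le_of_lt hS0 hSM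
  have hT : 0 ≤ (m1/σ₁)^2 + (m2/σ₂)^2 - 2*(m1/σ₁)*(m2/σ₂)*ρ :=
    sharpe_nonneg _ _ _ hρ₁ hρ₂
  have hS2 : S^2 = ((m1/σ₁)^2 + (m2/σ₂)^2 - 2*(m1/σ₁)*(m2/σ₂)*ρ) / (1 - ρ^2) :=
    Real.sq_sqrt (div_nonneg hT h1ρ.le)
  have hT' : S^2 * (σ₁^2 * σ₂^2 * (1 - ρ^2))
      = m1^2*σ₂^2 + m2^2*σ₁^2 - 2*m1*m2*σ₁*σ₂*ρ := by
    rw [hS2]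
    field_simp
  set D := R / (A * (M_ES - S)) with hDdef
  have hDen : 0 < A * (M_ES - S) := mul_pos ha (by linarith)
  have hD : 0 < D := div_pos hR hDen
  set C := D / (Real.sqrt (1 - ρ^2) * σ₁) + D / (Real.sqrt (1 - ρ^2) * σ₂) with hCdef
  have hsρ : 0 < Real.sqrt (1 - ρ^2) := Real.sqrt_pos.mpr h1ρ
  have hsub : K_ES ⊆ Metric.closedBall 0 C := by
    intro p hp
    rw [hK] at hp
    simp only [Set.mem_setOf_eq] at hp
    set Q := σ₁^2 * p.1^2 + σ₂^2 * p.2^2 + 2*ρ*σ₁*σ₂*p.1*p.2 with hQdef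
    have hQ0 : 0 ≤ Q := by
      rw [hQdef]; exact quad_nonneg σ₁ σ₂ ρ p.1 p.2 h1ρ.le
    -- Cauchy-Schwarz
    have hkey : (m1*p.1 + m2*p.2)^2 ≤ S^2 * Q := by
      have hX : (0:ℝ) < σ₁^2 * σ₂^2 * (1 - ρ^2) := by positivity
      have hineq : (m1*p.1 + m2*p.2)^2 * (σ₁^2 * σ₂^2 * (1 - ρ^2))
          ≤ (S^2 * Q) * (σ₁^2 * σ₂^2 * (1 - ρ^2)) := by
        have heq2 : (S^2 * Q) * (σ₁^2 * σ₂^2 * (1 - ρ^2))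
            = (m1^2*σ₂^2 + m2^2*σ₁^2 - 2*m1*m2*σ₁*σ₂*ρ) * Q := by
          rw [← hT']; ring
        rw [heq2, hQdef]
        exact cs_poly m1 m2 σ₁ σ₂ ρ p.1 p.2
      exact le_of_mul_le_mul_right hineq hX
    have hCS : m1*p.1 + m2*p.2 ≤ S * Real.sqrt Q := by
      have h1 : m1*p.1 + m2*p.2 ≤ |m1*p.1 + m2*p.2| := le_abs_self _
      have h2 : |m1*p.1 + m2*p.2| = Real.sqrt ((m1*p.1 + m2*p.2)^2) :=
        (Real.sqrt_sq_eq_abs _).symm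
      have h3 : Real.sqrt ((m1*p.1 + m2*p.2)^2) ≤ Real.sqrt (S^2 * Q) :=
        Real.sqrt_le_sqrt hkey
      have h4 : Real.sqrt (S^2 * Q) = S * Real.sqrt Q := by
        rw [Real.sqrt_mul (sq_nonneg S), Real.sqrt_sq hS0]
      linarith [h1, h2 ▸ h1, h3, h4 ▸ h3]
    -- from the constraint: sqrt Q ≤ D
    have hsplit : Real.sqrt (B * Q) = Real.sqrt B * Real.sqrt Q := Real.sqrt_mul hb.le _
    have hQle : Real.sqrt Q ≤ D := by
      have hcon : -A * (m1*p.1 + m2*p.2) + c * (Real.sqrt B * Real.sqrt Q) ≤ R := by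
        rw [← hsplit]; exact hp
      have h5 : c * Real.sqrt B * Real.sqrt Q ≤ R + A * (S * Real.sqrt Q) := by
        have := mul_le_mul_of_nonneg_left hCS ha.le
        linarith [this, hcon]
      have h6 : A * (M_ES - S) * Real.sqrt Q ≤ R := by
        have h7 : A * M_ES * Real.sqrt Q = c * Real.sqrt B * Real.sqrt Q := by
          rw [hAM]; ring
        linarith [h7, h5]
      rw [hDdef, le_div_iff₀ hDen]
      linarith [h6]
    have hQD : 0 ≤ D := hD.le
    -- coordinate bounds
    have hb1 : Real.sqrt (1 - ρ^2) * σ₁ * |p.1| ≤ D := by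
      have h7 : (1 - ρ^2) * σ₁^2 * p.1^2 ≤ Q := by
        rw [hQdef]; have := quad_lower1 σ₁ σ₂ ρ p.1 p.2; linarith
      have h8 : Real.sqrt ((1 - ρ^2) * σ₁^2 * p.1^2) ≤ Real.sqrt Q := Real.sqrt_le_sqrt h7
      have h9 : Real.sqrt ((1 - ρ^2) * σ₁^2 * p.1^2)
          = Real.sqrt (1 - ρ^2) * σ₁ * |p.1| := by
        rw [Real.sqrt_mul (by positivity), Real.sqrt_mul h1ρ.le,
          Real.sqrt_sq hσ₁.le, Real.sqrt_sq_eq_abs]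
      linarith [h9 ▸ h8]
    have hb2 : Real.sqrt (1 - ρ^2) * σ₂ * |p.2| ≤ D := by
      have h7 : (1 - ρ^2) * σ₂^2 * p.2^2 ≤ Q := by
        rw [hQdef]; have := quad_lower2 σ₁ σ₂ ρ p.1 p.2; linarith
      have h8 : Real.sqrt ((1 - ρ^2) * σ₂^2 * p.2^2) ≤ Real.sqrt Q := Real.sqrt_le_sqrt h7
      have h9 : Real.sqrt ((1 - ρ^2) * σ₂^2 * p.2^2)
          = Real.sqrt (1 - ρ^2) * σ₂ * |p.2| := by
        rw [Real.sqrt_mul (by positivity), Real.sqrt_mul h1ρ.le,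
          Real.sqrt_sq hσ₂.le, Real.sqrt_sq_eq_abs]
      linarith [h9 ▸ h8]
    have hp1 : |p.1| ≤ D / (Real.sqrt (1 - ρ^2) * σ₁) := by
      rw [le_div_iff₀ (by positivity)]
      linarith [hb1]
    have hp2 : |p.2| ≤ D / (Real.sqrt (1 - ρ^2) * σ₂) := by
      rw [le_div_iff₀ (by positivity)]
      linarith [hb2]
    have hc1 : (0:ℝ) ≤ D / (Real.sqrt (1 - ρ^2) * σ₁) := by positivity
    have hc2 : (0:ℝ) ≤ D / (Real.sqrt (1 - ρ^2) * σ₂) := by positivity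
    rw [Metric.mem_closedBall, dist_zero_right, Prod.norm_def]
    simp only [Real.norm_eq_abs]
    rw [hCdef]
    exact max_le (by linarith) (by linarith)
  exact (Metric.isBounded_closedBall).subset hsub
end
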